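/- arXiv:1711.08656 — 3 statements merged into one kernel-verified Lean document; each statement's English description precedes it below -/
import Mathlib

section
/- The quotient hedgehog J(κ) is a Fréchet–Urysohn space: for every subset A ⊆ J(κ) and every point x in the closure of A, there is a sequence of points of A converging to x. -/
open Set Topology Cardinal

universe u v

/-- The equivalence relation on `[0,1] × I` identifying all points with first coordinate `0`. -/
def hedgehogSetoid (I : Type u) : Setoid (Set.Icc (0:ℝ) 1 × I) where
  r p q := ((p.1 : ℝ) = 0 ∧ (q.1 : ℝ) = 0) ∨ p = q
  iseqv := by
    refine ⟨fun p => Or.inr rfl, ?_, ?_⟩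
    · rintro p q (⟨h1, h2⟩ | rfl)
      · exact Or.inl ⟨h2, h1⟩
      · exact Or.inr rfl
    · rintro p q r (⟨h1, h2⟩ | rfl) hqr
      · rcases hqr with ⟨h3, h4⟩ | rfl
        · exact Or.inl ⟨h1, h4⟩
        · exact Or.inl ⟨h1, h2⟩
      · exact hqr

/-- The hedgehog with spines indexed by `I`, as a set (quotient of `[0,1] × I`). -/
abbrev Hedgehog (I : Type u) := Quotient (hedgehogSetoid I)

/-- The product topology on `[0,1] × I`, where `[0,1]` carries the usual topology and
`I` carries the discrete topology. -/
def hedgehogBaseTop (I : Type u) : TopologicalSpace (Set.Icc (0:ℝ) 1 × I) :=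
  @instTopologicalSpaceProd _ _ inferInstance ⊥

/-- The quotient topology on the hedgehog: the quotient hedgehog `J(κ)`. -/
def quotHedgehogTop (I : Type u) : TopologicalSpace (Hedgehog I) :=
  TopologicalSpace.coinduced (Quotient.mk (hedgehogSetoid I)) (hedgehogBaseTop I)

/-- The projection `π_κ : J(κ) → [0,1]`, sending `(t, j)` to `t`. -/
def hedgehogPiKappa {I : Type u} : Hedgehog I → Set.Icc (0:ℝ) 1 :=
  Quotient.lift Prod.fst (by
    rintro p q (⟨h1, h2⟩ | rfl)
    · exact Subtype.ext (h1.trans h2.symm)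
    · rfl)

open Classical in
/-- The projection `π_i : J(κ) → [0,1]`, sending `(t, j)` to `t` if `j = i` and to `0`
otherwise. -/
noncomputable def hedgehogProj {I : Type u} (i : I) : Hedgehog I → Set.Icc (0:ℝ) 1 :=
  Quotient.lift (fun p => if p.2 = i then p.1 else ⟨0, by norm_num⟩) (by
    rintro p q (⟨h1, h2⟩ | rfl)
    · have hp : p.1 = (⟨0, by norm_num⟩ : Set.Icc (0:ℝ) 1) := Subtype.ext h1
      have hq : q.1 = (⟨0, by norm_num⟩ : Set.Icc (0:ℝ) 1) := Subtype.ext h2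
      try dsimp only
      split_ifs <;> simp [hp, hq]
    · rfl)

open Classical in
/-- The hedgehog metric: `d((t,i),(s,j)) = |t - s|` if `i = j` and `t + s` otherwise.
(It is defined via representatives; the formula does not depend on the choice of
representatives.) -/
noncomputable def hedgehogDist {I : Type u} (x y : Hedgehog I) : ℝ :=
  if x.out.2 = y.out.2 then |(x.out.1 : ℝ) - (y.out.1 : ℝ)|
  else (x.out.1 : ℝ) + (y.out.1 : ℝ)

/-- The metric hedgehog `MJ(κ)`: the hedgehog equipped with the hedgehog metric. -/
noncomputable def metricHedgehog (I : Type u) : MetricSpace (Hedgehog I) where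
  dist := hedgehogDist
  dist_self := by
    intro x
    show hedgehogDist x x = 0
    unfold hedgehogDist
    rw [if_pos rfl, sub_self, abs_zero]
  dist_comm := by
    intro x y
    show hedgehogDist x y = hedgehogDist y x
    unfold hedgehogDist
    rcases eq_or_ne x.out.2 y.out.2 with h | h
    · rw [if_pos h, if_pos h.symm, abs_sub_comm]
    · rw [if_neg h, if_neg (Ne.symm h), add_comm]
  dist_triangle := by
    intro x y z
    show hedgehogDist x z ≤ hedgehogDist x y + hedgehogDist y z
    unfold hedgehogDist
    have hx0 : (0:ℝ) ≤ x.out.1 := x.out.1.2.1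
    have hy0 : (0:ℝ) ≤ y.out.1 := y.out.1.2.1
    have hz0 : (0:ℝ) ≤ z.out.1 := z.out.1.2.1
    have hxy : |(x.out.1:ℝ) - y.out.1| ≤ (x.out.1:ℝ) + y.out.1 :=
      abs_le.mpr ⟨by linarith, by linarith⟩
    have hyz : |(y.out.1:ℝ) - z.out.1| ≤ (y.out.1:ℝ) + z.out.1 :=
      abs_le.mpr ⟨by linarith, by linarith⟩
    have hxz : |(x.out.1:ℝ) - z.out.1| ≤ (x.out.1:ℝ) + z.out.1 :=
      abs_le.mpr ⟨by linarith, by linarith⟩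
    have htri := abs_sub_le (x.out.1:ℝ) (y.out.1:ℝ) (z.out.1:ℝ)
    have h1 := le_abs_self ((x.out.1:ℝ) - y.out.1)
    have h2 := neg_abs_le ((x.out.1:ℝ) - y.out.1)
    have h3 := le_abs_self ((y.out.1:ℝ) - z.out.1)
    have h4 := neg_abs_le ((y.out.1:ℝ) - z.out.1)
    split_ifs <;> try linarith
    all_goals simp_all
  eq_of_dist_eq_zero := by
    intro x y h
    replace h : hedgehogDist x y = 0 := h
    unfold hedgehogDist at h
    have hx0 : (0:ℝ) ≤ x.out.1 := x.out.1.2.1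
    have hy0 : (0:ℝ) ≤ y.out.1 := y.out.1.2.1
    rw [← Quotient.out_eq x, ← Quotient.out_eq y]
    split_ifs at h with hc
    · have h1 : (x.out.1:ℝ) = y.out.1 := by
        have := abs_eq_zero.mp h
        linarith
      have : x.out = y.out := Prod.ext (Subtype.ext h1) hc
      rw [this]
    · exact Quotient.sound (Or.inl ⟨by linarith, by linarith⟩)

/-- The topology of the metric hedgehog `MJ(κ)`. -/
noncomputable def metricHedgehogTop (I : Type u) : TopologicalSpace (Hedgehog I) :=
  (metricHedgehog I).toUniformSpace.toTopologicalSpace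

/-- The bijection `Φ` from the hedgehog onto the axes `L(κ)` of the cube `[0,1]^I`,
viewed as a map into the cube: `Φ(t,i)(j) = t` if `j = i` and `0` otherwise. -/
noncomputable def hedgehogPhi {I : Type u} : Hedgehog I → (I → Set.Icc (0:ℝ) 1) :=
  fun x j => hedgehogProj j x

/-- The topology of the compact hedgehog `ΛJ(κ)`: the topology transported along `Φ`
from the subspace `L(κ)` of the Tychonoff cube `[0,1]^I`, i.e. the topology induced by `Φ`
from the product topology. -/
noncomputable def compactHedgehogTop (I : Type u) : TopologicalSpace (Hedgehog I) :=
  TopologicalSpace.induced hedgehogPhi inferInstance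

/-- The weight of a topological space: the minimum cardinality of a basis of its topology. -/
noncomputable def weight (X : Type u) [TopologicalSpace X] : Cardinal.{u} :=
  sInf { c : Cardinal.{u} | ∃ B : Set (Set X), TopologicalSpace.IsTopologicalBasis B ∧ #B = c }

/-- A family `A` of subsets of a topological space is discrete if every point has a
neighborhood meeting `A i` for at most one index `i`. -/
def IsDiscreteFamily {X : Type*} [TopologicalSpace X] {ι : Type*} (A : ι → Set X) : Prop :=
  ∀ x : X, ∃ N ∈ nhds x, { i | (A i ∩ N).Nonempty }.Subsingleton

/-- A set-indexed family of subsets of a topological space is discrete if every point has a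
neighborhood meeting at most one member of the family. -/
def IsDiscreteSetFamily {X : Type*} [TopologicalSpace X] (𝒜 : Set (Set X)) : Prop :=
  ∀ x : X, ∃ N ∈ nhds x, { A ∈ 𝒜 | (A ∩ N).Nonempty }.Subsingleton

/-- A topological space `X` is `κ`-collectionwise normal if every discrete family of closed
sets indexed by a set of cardinality `κ` can be separated by a pairwise disjoint family of
open sets. -/
def IsCollectionwiseNormalWrt (κ : Cardinal.{u}) (X : Type v) [TopologicalSpace X] : Prop :=
  ∀ (ι : Type u) (F : ι → Set X), #ι = κ → (∀ i, IsClosed (F i)) → IsDiscreteFamily F →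
    ∃ U : ι → Set X, (∀ i, IsOpen (U i)) ∧ (Pairwise fun i j => Disjoint (U i) (U j)) ∧
      ∀ i, F i ⊆ U i

/-- A topological space is completely metrizable if its topology is induced by some
complete metric. -/
def IsCompletelyMetrizable (X : Type*) [t : TopologicalSpace X] : Prop :=
  ∃ m : MetricSpace X, m.toUniformSpace.toTopologicalSpace = t ∧
    @CompleteSpace X m.toUniformSpace

section HedgehogFU

variable {I : Type u}

/-- Sets of the form `{p | p.1 ∈ u p.2}` with each `u i` open are open in the base. -/
lemma hedgehog_baseOpen (u : I → Set (Set.Icc (0:ℝ) 1)) (hu : ∀ i, IsOpen (u i)) :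
    @IsOpen _ (hedgehogBaseTop I) {p : Set.Icc (0:ℝ) 1 × I | p.1 ∈ u p.2} := by
  letI : TopologicalSpace I := ⊥
  haveI : DiscreteTopology I := ⟨rfl⟩
  have h : {p : Set.Icc (0:ℝ) 1 × I | p.1 ∈ u p.2} = ⋃ i, (u i) ×ˢ ({i} : Set I) := by
    ext p
    simp only [Set.mem_setOf_eq, Set.mem_iUnion, Set.mem_prod, Set.mem_singleton_iff]
    constructor
    · intro hp; exact ⟨p.2, hp, rfl⟩
    · rintro ⟨i, hp, rfl⟩; exact hp
  show @IsOpen _ (hedgehogBaseTop I) _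
  rw [h]
  exact isOpen_iUnion fun i => (hu i).prod (isOpen_discrete _)

lemma hedgehog_quot_isOpen {s : Set (Hedgehog I)}
    (h : @IsOpen _ (hedgehogBaseTop I) (Quotient.mk (hedgehogSetoid I) ⁻¹' s)) :
    @IsOpen _ (quotHedgehogTop I) s := by
  rw [quotHedgehogTop]
  exact isOpen_coinduced.mpr h

/-- A sequence along a single spine converges if the coordinates converge. -/
lemma hedgehog_spine_tendsto (i : I) (s : ℕ → Set.Icc (0:ℝ) 1) (c : Set.Icc (0:ℝ) 1)
    (h : Filter.Tendsto (fun n => ((s n : ℝ))) Filter.atTop (nhds (c : ℝ))) :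
    Filter.Tendsto (fun n => Quotient.mk (hedgehogSetoid I) (s n, i)) Filter.atTop
      (@nhds _ (quotHedgehogTop I) (Quotient.mk (hedgehogSetoid I) (c, i))) := by
  letI : TopologicalSpace (Hedgehog I) := quotHedgehogTop I
  rw [tendsto_nhds]
  intro U hU hcU
  have hW : @IsOpen _ (hedgehogBaseTop I) (Quotient.mk (hedgehogSetoid I) ⁻¹' U) := by
    have := hU
    rw [quotHedgehogTop] at this
    exact isOpen_coinduced.mp this
  letI : TopologicalSpace I := ⊥
  have hg : @Continuous (Set.Icc (0:ℝ) 1) _ _ (hedgehogBaseTop I)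
      (fun t : Set.Icc (0:ℝ) 1 => ((t, i) : Set.Icc (0:ℝ) 1 × I)) :=
    Continuous.prodMk continuous_id continuous_const
  have hGopen : IsOpen ((fun t : Set.Icc (0:ℝ) 1 => ((t, i) : Set.Icc (0:ℝ) 1 × I)) ⁻¹'
      (Quotient.mk (hedgehogSetoid I) ⁻¹' U)) := hW.preimage hg
  have hcmem : c ∈ (fun t : Set.Icc (0:ℝ) 1 => ((t, i) : Set.Icc (0:ℝ) 1 × I)) ⁻¹'
      (Quotient.mk (hedgehogSetoid I) ⁻¹' U) := hcU
  have hs : Filter.Tendsto s Filter.atTop (nhds c) := by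
    rw [tendsto_subtype_rng]; exact h
  exact hs (hGopen.mem_nhds hcmem)

end HedgehogFU

/-- The quotient hedgehog `J(κ)` is a Fréchet–Urysohn space: every point of the closure of
a subset `A` is the limit of a sequence of points of `A`. -/
theorem quotHedgehog_frechetUrysohn (I : Type u) :
    ∀ (A : Set (Hedgehog I)) (x : Hedgehog I),
      x ∈ @closure _ (quotHedgehogTop I) A →
        ∃ u : ℕ → Hedgehog I, (∀ n, u n ∈ A) ∧
          Filter.Tendsto u Filter.atTop (@nhds _ (quotHedgehogTop I) x) := by
  letI : TopologicalSpace (Hedgehog I) := quotHedgehogTop I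
  intro A x hx
  obtain ⟨⟨t, i⟩, rfl⟩ := Quotient.exists_rep x
  by_cases ht : (t : ℝ) = 0
  · -- the center of the hedgehog
    by_cases hxA : Quotient.mk (hedgehogSetoid I) (t, i) ∈ A
    · exact ⟨fun _ => _, fun _ => hxA, tendsto_const_nhds⟩
    · by_cases hspine : ∃ j : I, ∀ ε : ℝ, 0 < ε →
          ∃ s : Set.Icc (0:ℝ) 1, (s : ℝ) < ε ∧ Quotient.mk (hedgehogSetoid I) (s, j) ∈ A
      · -- some spine accumulates at the center
        obtain ⟨j, hj⟩ := hspine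
        choose s hs1 hs2 using fun n : ℕ => hj (1 / (n + 1)) (by positivity)
        refine ⟨fun n => Quotient.mk (hedgehogSetoid I) (s n, j), hs2, ?_⟩
        have hxeq : Quotient.mk (hedgehogSetoid I) (t, i) =
            Quotient.mk (hedgehogSetoid I) ((⟨0, by norm_num⟩ : Set.Icc (0:ℝ) 1), j) :=
          Quotient.sound (Or.inl ⟨ht, rfl⟩)
        rw [hxeq]
        apply hedgehog_spine_tendsto
        have hlim : Filter.Tendsto (fun n : ℕ => 1 / ((n : ℝ) + 1)) Filter.atTop (nhds 0) :=
          tendsto_one_div_add_atTop_nhds_zero_nat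
        have : Filter.Tendsto (fun n => ((s n : ℝ))) Filter.atTop (nhds 0) := by
          apply squeeze_zero (fun n => (s n).2.1) (fun n => le_of_lt (hs1 n)) hlim
        simpa using this
      · -- otherwise a small open set around the center misses `A`
        push_neg at hspine
        choose ε hε hεA using hspine
        set V : Set (Hedgehog I) :=
          Quotient.mk (hedgehogSetoid I) '' {p : Set.Icc (0:ℝ) 1 × I | (p.1 : ℝ) < ε p.2}
          with hVdef
        have hpre : Quotient.mk (hedgehogSetoid I) ⁻¹' V =
            {p : Set.Icc (0:ℝ) 1 × I | (p.1 : ℝ) < ε p.2} := by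
          ext p
          simp only [Set.mem_preimage, hVdef, Set.mem_image, Set.mem_setOf_eq]
          constructor
          · rintro ⟨p', hp', heq⟩
            rcases Quotient.exact heq with ⟨h1, h2⟩ | rfl
            · rw [h2]; exact lt_of_le_of_lt (le_of_eq rfl) (by simpa using hε p.2)
            · exact hp'
          · intro hp; exact ⟨p, hp, rfl⟩
        have hVopen : IsOpen V := by
          apply hedgehog_quot_isOpen
          rw [hpre]
          exact hedgehog_baseOpen (fun j => {s : Set.Icc (0:ℝ) 1 | (s : ℝ) < ε j})
            (fun j => (isOpen_Iio (a := ε j)).preimage continuous_subtype_val)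
        have hxV : Quotient.mk (hedgehogSetoid I) (t, i) ∈ V := by
          refine ⟨(t, i), ?_, rfl⟩
          show (t : ℝ) < ε i
          rw [ht]; exact hε i
        obtain ⟨y, hyV, hyA⟩ := mem_closure_iff.mp hx V hVopen hxV
        exfalso
        obtain ⟨p', hp', rfl⟩ := hyV
        by_cases h0 : ((p'.1 : ℝ)) = 0
        · exact hxA (by
            have : Quotient.mk (hedgehogSetoid I) p' = Quotient.mk (hedgehogSetoid I) (t, i) :=
              Quotient.sound (Or.inl ⟨h0, ht⟩)
            rwa [this] at hyA)
        · exact hεA p'.2 p'.1 hp' (by rwa [show ((p'.1, p'.2) : Set.Icc (0:ℝ) 1 × I) = p' from rfl])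
  · -- a point strictly inside a spine
    have ht' : 0 < (t : ℝ) := lt_of_le_of_ne t.2.1 (Ne.symm ht)
    set S : ℕ → Set (Set.Icc (0:ℝ) 1 × I) :=
      fun n => {p | p.2 = i ∧ |((p.1 : ℝ)) - t| < min (1 / ((n : ℝ) + 1)) (t : ℝ)} with hSdef
    have hrpos : ∀ n : ℕ, 0 < min (1 / ((n : ℝ) + 1)) t := fun n =>
      lt_min (by positivity) ht'
    have hVopen : ∀ n, IsOpen (Quotient.mk (hedgehogSetoid I) '' S n) := by
      intro n
      classical
      apply hedgehog_quot_isOpen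
      have hpre : Quotient.mk (hedgehogSetoid I) ⁻¹' (Quotient.mk (hedgehogSetoid I) '' S n)
          = S n := by
        ext p
        simp only [Set.mem_preimage, Set.mem_image]
        constructor
        · rintro ⟨p', hp', heq⟩
          rcases Quotient.exact heq with ⟨h1, h2⟩ | rfl
          · exfalso
            have := hp'.2
            rw [h1] at this
            have hlt : (t : ℝ) < min (1 / ((n : ℝ) + 1)) (t : ℝ) := by
              have := this; rwa [zero_sub, abs_neg, abs_of_pos ht'] at this
            exact absurd hlt (not_lt.mpr (min_le_right _ _))
          · exact hp'
        · intro hp; exact ⟨p, hp, rfl⟩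
      rw [hpre]
      set u : I → Set (Set.Icc (0:ℝ) 1) :=
        fun j => if j = i then
            {s : Set.Icc (0:ℝ) 1 | |((s : ℝ)) - t| < min (1 / ((n : ℝ) + 1)) (t : ℝ)}
          else (∅ : Set (Set.Icc (0:ℝ) 1)) with hudef
      have hSeq : S n = {p : Set.Icc (0:ℝ) 1 × I | p.1 ∈ u p.2} := by
        ext p
        by_cases hpi : p.2 = i <;> simp [hSdef, hudef, hpi]
      rw [hSeq]
      refine hedgehog_baseOpen u ?_
      intro j
      rw [hudef]
      by_cases hji : j = i
      · simp only [if_pos hji]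
        exact (isOpen_Iio (a := min (1 / ((n : ℝ) + 1)) (t : ℝ))).preimage
          ((continuous_subtype_val.sub continuous_const).abs)
      · simp only [if_neg hji]; exact isOpen_empty
    have hxV : ∀ n, Quotient.mk (hedgehogSetoid I) (t, i) ∈
        Quotient.mk (hedgehogSetoid I) '' S n := fun n =>
      ⟨(t, i), ⟨rfl, by simpa using hrpos n⟩, rfl⟩
    have hmem : ∀ n, ((Quotient.mk (hedgehogSetoid I) '' S n) ∩ A).Nonempty := fun n =>
      mem_closure_iff.mp hx _ (hVopen n) (hxV n)
    choose y hy1 hy2 using hmem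
    simp only [Set.mem_image] at hy1
    choose p hpS hpeq using hy1
    refine ⟨y, hy2, ?_⟩
    have hyeq : ∀ n, y n = Quotient.mk (hedgehogSetoid I) ((p n).1, i) := by
      intro n
      rw [← hpeq n]
      congr 1
      exact Prod.ext rfl (hpS n).1
    have htend : Filter.Tendsto (fun n => Quotient.mk (hedgehogSetoid I) ((p n).1, i))
        Filter.atTop (@nhds _ (quotHedgehogTop I) (Quotient.mk (hedgehogSetoid I) (t, i))) := by
      apply hedgehog_spine_tendsto
      have hd : Filter.Tendsto (fun n => (((p n).1 : ℝ)) - t) Filter.atTop (nhds 0) := by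
        refine squeeze_zero_norm (fun n => ?_) tendsto_one_div_add_atTop_nhds_zero_nat
        exact le_of_lt (lt_of_lt_of_le (hpS n).2 (min_le_left _ _))
      have := hd.add (tendsto_const_nhds (x := (t : ℝ)))
      simpa using this
    exact (Filter.tendsto_congr hyeq).mpr htend
end

section
/- The topology of the quotient hedgehog J(κ) is finer than the topology induced by the hedgehog metric on J(κ), and the two topologies coincide if and only if κ < ℵ₀. -/
open Set Topology Cardinal

universe u v

section HedgehogAux

variable {I : Type u}

open Classical in
lemma hedgehogDist_mk (p q : Set.Icc (0:ℝ) 1 × I) :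
    hedgehogDist (Quotient.mk (hedgehogSetoid I) p) (Quotient.mk (hedgehogSetoid I) q) =
      if p.2 = q.2 then |(p.1:ℝ) - q.1| else (p.1:ℝ) + q.1 := by
  have hp : ((Quotient.mk (hedgehogSetoid I) p).out.1.1 = 0 ∧ (p.1:ℝ) = 0) ∨
      (Quotient.mk (hedgehogSetoid I) p).out = p :=
    @Quotient.mk_out _ (hedgehogSetoid I) p
  have hq : ((Quotient.mk (hedgehogSetoid I) q).out.1.1 = 0 ∧ (q.1:ℝ) = 0) ∨
      (Quotient.mk (hedgehogSetoid I) q).out = q := @Quotient.mk_out _ (hedgehogSetoid I) q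
  have hq0 : (0:ℝ) ≤ q.1.1 := q.1.2.1
  have hp0 : (0:ℝ) ≤ p.1.1 := p.1.2.1
  unfold hedgehogDist
  rcases hp with ⟨h1, h2⟩ | h3 <;> rcases hq with ⟨h4, h5⟩ | h6
  · split_ifs <;> simp [h1, h2, h4, h5]
  · rw [h6]; split_ifs <;>
      simp [h1, h2, zero_sub, abs_neg, abs_of_nonneg hq0, add_comm]
  · rw [h3]; split_ifs <;>
      simp [h4, h5, sub_zero, abs_of_nonneg hp0]
  · rw [h3, h6]

end HedgehogAux
lemma quot_le_metric (I : Type u) : quotHedgehogTop I ≤ metricHedgehogTop I := by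
  letI m : MetricSpace (Hedgehog I) := metricHedgehog I
  rw [TopologicalSpace.le_def]
  intro U hU
  have hU' : ∀ x ∈ U, ∃ ε > 0, ∀ y, hedgehogDist y x < ε → y ∈ U := by
    intro x hx
    obtain ⟨ε, hε, hb⟩ := Metric.isOpen_iff.mp hU x hx
    exact ⟨ε, hε, fun y hy => hb (Metric.mem_ball.mpr hy)⟩
  letI : TopologicalSpace I := ⊥
  haveI : DiscreteTopology I := ⟨rfl⟩
  show IsOpen ((Quotient.mk (hedgehogSetoid I)) ⁻¹' U)
  rw [isOpen_iff_mem_nhds]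
  rintro ⟨t, i⟩ hti
  obtain ⟨ε, hε, hb⟩ := hU' _ hti
  rw [nhds_prod_eq, nhds_discrete I]
  refine Filter.mem_of_superset
    (Filter.prod_mem_prod (Metric.ball_mem_nhds t hε)
      (Filter.mem_pure.mpr (Set.mem_singleton i))) ?_
  rintro ⟨s, j⟩ ⟨hs, hj⟩
  rw [Set.mem_singleton_iff] at hj
  subst hj
  apply hb
  rw [hedgehogDist_mk]
  simp only [if_pos rfl]
  have hd := Metric.mem_ball.mp hs
  rwa [Subtype.dist_eq, Real.dist_eq] at hd
lemma metric_le_quot_of_finite (I : Type u) [Finite I] :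
    metricHedgehogTop I ≤ quotHedgehogTop I := by
  letI m : MetricSpace (Hedgehog I) := metricHedgehog I
  letI : TopologicalSpace I := ⊥
  haveI : DiscreteTopology I := ⟨rfl⟩
  haveI : Fintype I := Fintype.ofFinite I
  rw [TopologicalSpace.le_def]
  intro U hU
  have hpre : IsOpen ((Quotient.mk (hedgehogSetoid I)) ⁻¹' U) := hU
  have hslice : ∀ j : I, IsOpen {s : Set.Icc (0:ℝ) 1 |
      Quotient.mk (hedgehogSetoid I) (s, j) ∈ U} :=
    fun j => hpre.preimage (continuous_id.prodMk continuous_const)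
  suffices hsuf : ∀ x ∈ U, ∃ ε > 0, Metric.ball x ε ⊆ U by
    exact Metric.isOpen_iff.mpr hsuf
  intro x hx
  set p := x.out with hp
  have hxp : x = Quotient.mk (hedgehogSetoid I) p := (Quotient.out_eq x).symm
  rcases eq_or_lt_of_le p.1.2.1 with h0 | h0
  · -- p.1 = 0
    have hz : ∀ j : I,
        Quotient.mk (hedgehogSetoid I) ((⟨0, by norm_num⟩ : Set.Icc (0:ℝ) 1), j) ∈ U := by
      intro j
      have he : Quotient.mk (hedgehogSetoid I)
          ((⟨0, by norm_num⟩ : Set.Icc (0:ℝ) 1), j) = x := by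
        rw [hxp]
        exact Quotient.sound (Or.inl ⟨rfl, h0.symm⟩)
      rwa [he]
    have hballs : ∀ j : I, ∃ ε > 0, ∀ s : Set.Icc (0:ℝ) 1, (s:ℝ) < ε →
        Quotient.mk (hedgehogSetoid I) (s, j) ∈ U := by
      intro j
      obtain ⟨ε, hε, hb⟩ := Metric.isOpen_iff.mp (hslice j) _ (hz j)
      refine ⟨ε, hε, fun s hs => hb ?_⟩
      rw [Metric.mem_ball, Subtype.dist_eq, Real.dist_eq]
      simpa [abs_of_nonneg s.2.1] using hs
    choose ε hεpos hεball using hballs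
    haveI : Nonempty I := ⟨p.2⟩
    refine ⟨Finset.univ.inf' Finset.univ_nonempty ε, ?_, ?_⟩
    · exact (Finset.lt_inf'_iff _).mpr fun j _ => hεpos j
    · intro y hy
      rw [Metric.mem_ball] at hy
      have hyd : hedgehogDist y x < Finset.univ.inf' Finset.univ_nonempty ε := hy
      rw [hxp, ← Quotient.out_eq y, hedgehogDist_mk] at hyd
      have hlt : (y.out.1 : ℝ) < Finset.univ.inf' Finset.univ_nonempty ε := by
        split_ifs at hyd with hj
        · rwa [← h0, sub_zero, abs_of_nonneg y.out.1.2.1] at hyd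
        · rwa [← h0, add_zero] at hyd
      have hm := hεball y.out.2 y.out.1
        (lt_of_lt_of_le hlt (Finset.inf'_le _ (Finset.mem_univ _)))
      rw [← Quotient.out_eq y]
      simpa using hm
  · -- 0 < p.1
    obtain ⟨ε₀, hε₀, hb⟩ := Metric.isOpen_iff.mp (hslice p.2) p.1
      (by show Quotient.mk (hedgehogSetoid I) (p.1, p.2) ∈ U
          rw [Prod.mk.eta, ← hxp]; exact hx)
    refine ⟨min ε₀ p.1.1, lt_min hε₀ h0, ?_⟩
    intro y hy
    rw [Metric.mem_ball] at hy
    have hyd : hedgehogDist y x < min ε₀ p.1.1 := hy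
    rw [hxp, ← Quotient.out_eq y, hedgehogDist_mk] at hyd
    by_cases hj : y.out.2 = p.2
    · rw [if_pos hj] at hyd
      have hball : y.out.1 ∈ Metric.ball p.1 ε₀ := by
        rw [Metric.mem_ball, Subtype.dist_eq, Real.dist_eq]
        exact lt_of_lt_of_le hyd (min_le_left _ _)
      have hmem := hb hball
      rw [← Quotient.out_eq y]
      have he : (y.out.1, p.2) = y.out := by rw [← hj]
      rw [← he]
      exact hmem
    · rw [if_neg hj] at hyd
      exfalso
      have h1 : (0:ℝ) ≤ y.out.1.1 := y.out.1.2.1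
      have h2 := lt_of_lt_of_le hyd (min_le_right _ _)
      linarith
lemma quot_ne_metric_of_infinite (I : Type u) [Infinite I] :
    quotHedgehogTop I ≠ metricHedgehogTop I := by
  classical
  letI m : MetricSpace (Hedgehog I) := metricHedgehog I
  letI : TopologicalSpace I := ⊥
  haveI : DiscreteTopology I := ⟨rfl⟩
  set g := Infinite.natEmbedding I with hg
  set f : I → ℝ := fun j => if h : ∃ n, g n = j then ((h.choose : ℝ) + 2)⁻¹ else 1 with hf
  have hfpos : ∀ j, 0 < f j := by
    intro j
    rw [hf]
    dsimp only
    split_ifs with h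
    · positivity
    · norm_num
  have hfg : ∀ n : ℕ, f (g n) = ((n : ℝ) + 2)⁻¹ := by
    intro n
    have h : ∃ k, g k = g n := ⟨n, rfl⟩
    have hk : h.choose = n := g.injective h.choose_spec
    rw [hf]
    dsimp only
    rw [dif_pos h, hk]
  set V : Set (Set.Icc (0:ℝ) 1 × I) := {p | (p.1 : ℝ) < f p.2} with hV
  have hVopen : IsOpen V := by
    have : V = ⋃ j : I, {s : Set.Icc (0:ℝ) 1 | (s : ℝ) < f j} ×ˢ ({j} : Set I) := by
      ext p
      simp only [Set.mem_iUnion, Set.mem_prod, Set.mem_singleton_iff, Set.mem_setOf_eq, hV]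
      constructor
      · intro h; exact ⟨p.2, h, rfl⟩
      · rintro ⟨j, h1, h2⟩; rwa [h2]
    rw [this]
    refine isOpen_iUnion fun j => IsOpen.prod ?_ (isOpen_discrete _)
    exact isOpen_Iio.preimage continuous_subtype_val
  set U : Set (Hedgehog I) := Quotient.mk (hedgehogSetoid I) '' V with hU
  have hsat : (Quotient.mk (hedgehogSetoid I)) ⁻¹' U = V := by
    ext p
    simp only [Set.mem_preimage, hU, Set.mem_image]
    constructor
    · rintro ⟨q, hqV, hmk⟩
      have hrel : ((q.1 : ℝ) = 0 ∧ (p.1 : ℝ) = 0) ∨ q = p := Quotient.exact hmk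
      rcases hrel with ⟨h1, h2⟩ | rfl
      · show (p.1 : ℝ) < f p.2
        rw [h2]; exact hfpos p.2
      · exact hqV
    · intro h; exact ⟨p, h, rfl⟩
  have hUquot : (quotHedgehogTop I).IsOpen U := by
    show (hedgehogBaseTop I).IsOpen ((Quotient.mk (hedgehogSetoid I)) ⁻¹' U)
    rw [hsat]
    exact hVopen
  intro heq
  have hUmet : (metricHedgehogTop I).IsOpen U := heq ▸ hUquot
  set z : Hedgehog I := Quotient.mk (hedgehogSetoid I) ((⟨0, by norm_num⟩ : Set.Icc (0:ℝ) 1), g 0)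
    with hz
  have hzU : z ∈ U := ⟨_, hfpos (g 0), rfl⟩
  obtain ⟨ε, hε, hball⟩ := Metric.isOpen_iff.mp hUmet z hzU
  obtain ⟨n, hn⟩ := exists_nat_gt ε⁻¹
  have hn2 : ε⁻¹ < (n : ℝ) + 2 := by linarith
  have htε : ((n : ℝ) + 2)⁻¹ < ε := by
    rw [inv_lt_comm₀ (by positivity) hε]
    exact hn2
  set t : ℝ := ((n : ℝ) + 2)⁻¹ with ht
  have htpos : 0 < t := by positivity
  have htle : t ≤ 1 := by
    rw [ht]
    rw [inv_le_one₀ (by positivity)]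
    linarith [Nat.cast_nonneg (α := ℝ) n]
  set y : Hedgehog I :=
    Quotient.mk (hedgehogSetoid I) ((⟨t, htpos.le, htle⟩ : Set.Icc (0:ℝ) 1), g n) with hy
  have hdyz : dist y z < ε := by
    show hedgehogDist y z < ε
    rw [hy, hz, hedgehogDist_mk]
    split_ifs <;> simpa [abs_of_nonneg htpos.le] using htε
  have hyU : y ∈ U := hball (Metric.mem_ball.mpr hdyz)
  obtain ⟨q, hqV, hmk⟩ := hyU
  have hrel : ((q.1 : ℝ) = 0 ∧ t = 0) ∨
      q = ((⟨t, htpos.le, htle⟩ : Set.Icc (0:ℝ) 1), g n) := Quotient.exact hmk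
  rcases hrel with ⟨_, h2⟩ | rfl
  · exact absurd h2 htpos.ne'
  · have : t < f (g n) := hqV
    rw [hfg n] at this
    exact absurd this (lt_irrefl _)
/-- The quotient hedgehog topology is finer than the metric hedgehog topology, and they
coincide iff `κ < ℵ₀`. -/
theorem quotHedgehogTop_le_metricHedgehogTop (I : Type u) :
    quotHedgehogTop I ≤ metricHedgehogTop I ∧
      (quotHedgehogTop I = metricHedgehogTop I ↔ #I < Cardinal.aleph0) := by
  refine ⟨quot_le_metric I, ?_, ?_⟩
  · intro h
    by_contra hk
    rw [not_lt] at hk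
    haveI : Infinite I := Cardinal.infinite_iff.mpr hk
    exact quot_ne_metric_of_infinite I h
  · intro hk
    haveI : Finite I := Cardinal.lt_aleph0_iff_finite.mp hk
    exact le_antisymm (quot_le_metric I) (metric_le_quot_of_finite I)
end

section
/- The topology of the metric hedgehog MJ(κ) is finer than the topology of the compact hedgehog ΛJ(κ), and the two topologies coincide if and only if κ < ℵ₀. -/
open Set Topology Cardinal

universe u v

open Classical in
lemma hedgehogProj_eq {I : Type u} (i : I) (x : Hedgehog I) :
    hedgehogProj i x = if x.out.2 = i then x.out.1 else ⟨0, by norm_num⟩ := by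
  conv_lhs => rw [← Quotient.out_eq x]
  rfl

open Classical in
lemma hedgehogProj_mk {I : Type u} (i : I) (p : Set.Icc (0:ℝ) 1 × I) :
    hedgehogProj i (Quotient.mk (hedgehogSetoid I) p) =
      if p.2 = i then p.1 else ⟨0, by norm_num⟩ := rfl

lemma hedgehogDist_eq {I : Type u} (x y : Hedgehog I) :
    @dist _ (metricHedgehog I).toDist x y = hedgehogDist x y := rfl

/-- Each projection is 1-Lipschitz for the hedgehog distance. -/
lemma dist_hedgehogProj_le {I : Type u} (i : I) (x y : Hedgehog I) :
    dist (hedgehogProj i x) (hedgehogProj i y) ≤ hedgehogDist x y := by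
  have ht0 : (0:ℝ) ≤ x.out.1 := x.out.1.2.1
  have hs0 : (0:ℝ) ≤ y.out.1 := y.out.1.2.1
  rw [hedgehogProj_eq, hedgehogProj_eq, Subtype.dist_eq, hedgehogDist]
  have habs : (0:ℝ) ≤ |(x.out.1:ℝ) - y.out.1| := abs_nonneg _
  have hz : ((⟨0, by norm_num⟩ : Set.Icc (0:ℝ) 1) : ℝ) = 0 := rfl
  rcases eq_or_ne x.out.2 y.out.2 with h | h
  · rw [if_pos h]
    rcases eq_or_ne x.out.2 i with hx | hx
    · rw [if_pos hx, if_pos (h.symm.trans hx)]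
      simp [Real.dist_eq]
    · rw [if_neg hx, if_neg (fun hy => hx (h.trans hy))]
      simpa [Real.dist_eq, hz] using habs
  · rw [if_neg h]
    rcases eq_or_ne x.out.2 i with hx | hx
    · rw [if_pos hx, if_neg (fun hy => h (hx.trans hy.symm))]
      simp only [Real.dist_eq, hz, sub_zero]
      rw [abs_of_nonneg ht0]; linarith
    · rw [if_neg hx]
      rcases eq_or_ne y.out.2 i with hy | hy
      · rw [if_pos hy]
        simp only [Real.dist_eq, hz, zero_sub, abs_neg]
        rw [abs_of_nonneg hs0]; linarith
      · rw [if_neg hy]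
        simp only [Real.dist_eq, hz, sub_self, abs_zero]
        linarith

/-- The hedgehog distance is bounded by the sum of two projection distances. -/
lemma hedgehogDist_le {I : Type u} (x y : Hedgehog I) :
    hedgehogDist x y ≤ dist (hedgehogProj x.out.2 x) (hedgehogProj x.out.2 y) +
      dist (hedgehogProj y.out.2 x) (hedgehogProj y.out.2 y) := by
  have ht0 : (0:ℝ) ≤ x.out.1 := x.out.1.2.1
  have hs0 : (0:ℝ) ≤ y.out.1 := y.out.1.2.1
  rw [hedgehogProj_eq x.out.2 x, hedgehogProj_eq x.out.2 y,
    hedgehogProj_eq y.out.2 x, hedgehogProj_eq y.out.2 y,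
    Subtype.dist_eq, Subtype.dist_eq, hedgehogDist]
  rcases eq_or_ne x.out.2 y.out.2 with h | h
  · rw [if_pos h, if_pos rfl, if_pos h, if_pos h.symm, if_pos rfl]
    simp only [Real.dist_eq]
    have := abs_nonneg ((x.out.1:ℝ) - y.out.1)
    linarith
  · rw [if_neg h, if_pos rfl, if_neg (Ne.symm h), if_neg h, if_pos rfl]
    simp only [Real.dist_eq, Set.Icc.coe_zero, sub_zero, zero_sub, abs_neg]
    rw [abs_of_nonneg ht0, abs_of_nonneg hs0]

lemma metric_le_compact (I : Type u) : metricHedgehogTop I ≤ compactHedgehogTop I := by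
  letI : MetricSpace (Hedgehog I) := metricHedgehog I
  have hc : Continuous (hedgehogPhi : Hedgehog I → (I → Set.Icc (0:ℝ) 1)) := by
    apply continuous_pi
    intro i
    refine LipschitzWith.continuous (K := 1) ?_
    refine LipschitzWith.of_dist_le_mul fun x y => ?_
    rw [NNReal.coe_one, one_mul]
    exact dist_hedgehogProj_le i x y
  exact continuous_iff_le_induced.mp hc

lemma compact_le_metric (I : Type u) [Finite I] :
    compactHedgehogTop I ≤ metricHedgehogTop I := by
  letI : MetricSpace (Hedgehog I) := metricHedgehog I
  intro U hU
  have hU' : IsOpen U := hU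
  rw [Metric.isOpen_iff] at hU'
  -- For each x ∈ U, choose an open box in the cube
  rw [compactHedgehogTop, isOpen_induced_iff]
  choose ε hε hball using hU'
  classical
  refine ⟨⋃ (x : U), ⋂ (i : I),
      (fun φ : I → Set.Icc (0:ℝ) 1 => φ i) ⁻¹'
        Metric.ball (hedgehogPhi x.1 i) (ε x.1 x.2 / 2), ?_, ?_⟩
  · refine isOpen_iUnion fun x => isOpen_iInter_of_finite fun i => ?_
    exact (Metric.isOpen_ball).preimage (continuous_apply i)
  · apply Set.Subset.antisymm
    · rintro y hy
      simp only [Set.mem_iUnion, Set.mem_iInter, Set.mem_preimage, Metric.mem_ball] at hy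
      obtain ⟨⟨x, hxU⟩, hy⟩ := hy
      apply hball x hxU
      rw [Metric.mem_ball]
      calc dist y x = hedgehogDist y x := rfl
        _ ≤ dist (hedgehogProj y.out.2 y) (hedgehogProj y.out.2 x) +
              dist (hedgehogProj x.out.2 y) (hedgehogProj x.out.2 x) := hedgehogDist_le y x
        _ < ε x hxU / 2 + ε x hxU / 2 := by
            exact add_lt_add (hy y.out.2) (hy x.out.2)
        _ = ε x hxU := by ring
    · intro x hx
      simp only [Set.mem_preimage, Set.mem_iUnion, Set.mem_iInter, Metric.mem_ball]
      exact ⟨⟨x, hx⟩, fun i => by rw [dist_self]; exact half_pos (hε x hx)⟩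

lemma not_compact_eq_metric (I : Type u) [Infinite I] :
    metricHedgehogTop I ≠ compactHedgehogTop I := by
  letI : MetricSpace (Hedgehog I) := metricHedgehog I
  obtain ⟨i₀⟩ := (inferInstance : Infinite I).nonempty
  set z : Hedgehog I := Quotient.mk (hedgehogSetoid I) (⟨0, by norm_num⟩, i₀) with hz
  intro h
  have hball : IsOpen[metricHedgehogTop I] (Metric.ball z (1/2)) := Metric.isOpen_ball
  rw [h, compactHedgehogTop, isOpen_induced_iff] at hball
  obtain ⟨S, hS, hSpre⟩ := hball
  have hzS : hedgehogPhi z ∈ S := by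
    rw [← Set.mem_preimage, hSpre]
    exact Metric.mem_ball_self (by norm_num)
  rw [isOpen_pi_iff] at hS
  obtain ⟨F, u, hu, hFS⟩ := hS _ hzS
  obtain ⟨j, hj⟩ := Infinite.exists_notMem_finset F
  set p : Hedgehog I := Quotient.mk (hedgehogSetoid I) (⟨1, by norm_num⟩, j) with hp
  have hPhiz : ∀ i : I, hedgehogPhi z i = ⟨0, by norm_num⟩ := by
    intro i
    show hedgehogProj i z = _
    rw [hz, hedgehogProj_mk]
    split_ifs <;> rfl
  have hpS : p ∈ hedgehogPhi ⁻¹' S := by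
    apply Set.mem_preimage.mpr
    apply hFS
    intro i hi
    have hji : j ≠ i := fun hji => hj (hji ▸ hi)
    have heq : hedgehogPhi p i = hedgehogPhi z i := by
      rw [hPhiz i]
      show hedgehogProj i p = _
      rw [hp, hedgehogProj_mk, if_neg hji]
    rw [heq]
    exact (hu i hi).2
  rw [hSpre, Metric.mem_ball] at hpS
  -- compute the distance : it equals 1
  have hzout : (z.out.1 : ℝ) = 0 := by
    have := Quotient.exact (Quotient.out_eq z)
    rcases this with ⟨h1, _⟩ | h1
    · exact h1
    · rw [h1]
  have hpout : (p.out.1 : ℝ) = 1 := by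
    have := Quotient.exact (Quotient.out_eq p)
    rcases this with ⟨_, h1⟩ | h1
    · norm_num at h1
    · rw [h1]
  have : dist p z = 1 := by
    show hedgehogDist p z = 1
    rw [hedgehogDist, hpout, hzout]
    split_ifs <;> norm_num
  rw [this] at hpS
  norm_num at hpS

/-- The metric hedgehog topology is finer than the compact hedgehog topology, and they
coincide iff `κ < ℵ₀`. -/
theorem metricHedgehogTop_le_compactHedgehogTop (I : Type u) :
    metricHedgehogTop I ≤ compactHedgehogTop I ∧
      (metricHedgehogTop I = compactHedgehogTop I ↔ #I < Cardinal.aleph0) := by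
  refine ⟨metric_le_compact I, ?_, ?_⟩
  · intro h
    by_contra hk
    rw [not_lt] at hk
    have : Infinite I := Cardinal.infinite_iff.mpr hk
    exact not_compact_eq_metric I h
  · intro h
    have : Finite I := Cardinal.lt_aleph0_iff_finite.mp h
    exact le_antisymm (metric_le_compact I) (compact_le_metric I)
end
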